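/- Let u⋆ be the solution of K u⋆ = f and ũ⋆ any solution of 𝒫 K ũ⋆ = 𝒫 f. For any ũ ∈ ℝ^{m+n}, if u = Z_k (Z_kᵀ K Z_k)⁻¹ Z_kᵀ f + 𝒫ᵀ ũ, then the error satisfies u⋆ − u = 𝒫ᵀ (ũ⋆ − ũ). -/

import Mathlib

open Matrix

/-- If `u⋆` solves `K u⋆ = f`, `ũ⋆` solves `Pcal K ũ⋆ = Pcal f`, and
`u = Z_k (Z_kᵀ K Z_k)⁻¹ Z_kᵀ f + Pcalᵀ ũ`, then `u⋆ − u = Pcalᵀ (ũ⋆ − ũ)`. -/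
theorem deflated_error_relation (m n k : ℕ)
    (M : Matrix (Fin m) (Fin m) ℝ) (N : Matrix (Fin n) (Fin n) ℝ)
    (A : Matrix (Fin m) (Fin n) ℝ)
    (hM : M.PosDef) (hN : N.PosDef)
    (Uk : Matrix (Fin m) (Fin k) ℝ) (Vk : Matrix (Fin n) (Fin k) ℝ)
    (Sig : Matrix (Fin k) (Fin k) ℝ)
    (hSigDiag : ∀ i j, i ≠ j → Sig i j = 0) (hSigNonneg : ∀ i, 0 ≤ Sig i i)
    (hUk : Ukᵀ * M * Uk = 1) (hVk : Vkᵀ * N * Vk = 1)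
    (hAV : A * Vk = M * Uk * Sig) (hAU : Aᵀ * Uk = N * Vk * Sig)
    (P : Matrix (Fin m) (Fin m) ℝ) (hP : P = 1 - M * Uk * Ukᵀ)
    (Q : Matrix (Fin n) (Fin n) ℝ) (hQ : Q = 1 - Vk * Vkᵀ * N)
    (K : Matrix (Fin m ⊕ Fin n) (Fin m ⊕ Fin n) ℝ)
    (hK : K = Matrix.fromBlocks M A Aᵀ (-N))
    (Pcal : Matrix (Fin m ⊕ Fin n) (Fin m ⊕ Fin n) ℝ)
    (hPcal : Pcal = Matrix.fromBlocks P 0 0 Qᵀ)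
    (Z : Matrix (Fin m ⊕ Fin n) (Fin k ⊕ Fin k) ℝ)
    (hZ : Z = Matrix.fromBlocks Uk 0 0 Vk)
    (f ustar utstar ut u : Fin m ⊕ Fin n → ℝ)
    (hustar : K.mulVec ustar = f)
    (hutstar : (Pcal * K).mulVec utstar = Pcal.mulVec f)
    (hu : u = Z.mulVec (((Zᵀ * K * Z)⁻¹).mulVec (Zᵀ.mulVec f)) + Pcalᵀ.mulVec ut) :
    ustar - u = Pcalᵀ.mulVec (utstar - ut) := by
  -- symmetry facts
  have hMs : Mᵀ = M := (by simpa using hM.1 : M.IsSymm)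
  have hNs : Nᵀ = N := (by simpa using hN.1 : N.IsSymm)
  obtain ⟨s, hSigd⟩ : ∃ s : Fin k → ℝ, Sig = Matrix.diagonal s := by
    refine ⟨fun i => Sig i i, ?_⟩
    ext i j
    by_cases hij : i = j
    · subst hij; simp
    · simp [Matrix.diagonal, hij, hSigDiag i j hij]
  have hSs : Sigᵀ = Sig := by rw [hSigd]; exact Matrix.diagonal_transpose _
  have hpos : ∀ i : Fin k, (0:ℝ) < 1 + s i * s i := fun i => by nlinarith [mul_self_nonneg (s i)]
  set E : Matrix (Fin k) (Fin k) ℝ :=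
    Matrix.diagonal (fun i => (1 + s i * s i)⁻¹) with hEdef
  have hE1 : E + E * (Sig * Sig) = 1 := by
    rw [hEdef, hSigd, Matrix.diagonal_mul_diagonal, Matrix.diagonal_mul_diagonal,
      Matrix.diagonal_add, ← Matrix.diagonal_one]
    refine congrArg Matrix.diagonal (funext fun i => ?_)
    have := (hpos i).ne'
    field_simp
  have hES : E * Sig = Sig * E := by
    rw [hEdef, hSigd, Matrix.diagonal_mul_diagonal, Matrix.diagonal_mul_diagonal]
    exact congrArg Matrix.diagonal (funext fun i => mul_comm _ _)
  -- basic identities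
  have hUAV : Ukᵀ * A * Vk = Sig := by
    rw [Matrix.mul_assoc, hAV, ← Matrix.mul_assoc, ← Matrix.mul_assoc, hUk, Matrix.one_mul]
  have hVAU : Vkᵀ * Aᵀ * Uk = Sig := by
    rw [Matrix.mul_assoc, hAU, ← Matrix.mul_assoc, ← Matrix.mul_assoc, hVk, Matrix.one_mul]
  have hUA : Ukᵀ * A = Sig * Vkᵀ * N := by
    calc Ukᵀ * A = (Aᵀ * Uk)ᵀ := by rw [Matrix.transpose_mul, Matrix.transpose_transpose]
    _ = (N * Vk * Sig)ᵀ := by rw [hAU]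
    _ = Sig * Vkᵀ * N := by
        rw [Matrix.transpose_mul, Matrix.transpose_mul, hSs, hNs, ← Matrix.mul_assoc]
  have hVA : Vkᵀ * Aᵀ = Sig * Ukᵀ * M := by
    calc Vkᵀ * Aᵀ = (A * Vk)ᵀ := by rw [Matrix.transpose_mul]
    _ = (M * Uk * Sig)ᵀ := by rw [hAV]
    _ = Sig * Ukᵀ * M := by
        rw [Matrix.transpose_mul, Matrix.transpose_mul, hSs, hMs, ← Matrix.mul_assoc]
  -- absorbed forms
  have hAV' : ∀ {p : Type} [Fintype p] (X : Matrix (Fin k) p ℝ),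
      A * (Vk * X) = M * (Uk * (Sig * X)) := by
    intro p _ X
    rw [← Matrix.mul_assoc, hAV, Matrix.mul_assoc, Matrix.mul_assoc]
  have hAU' : ∀ {p : Type} [Fintype p] (X : Matrix (Fin k) p ℝ),
      Aᵀ * (Uk * X) = N * (Vk * (Sig * X)) := by
    intro p _ X
    rw [← Matrix.mul_assoc, hAU, Matrix.mul_assoc, Matrix.mul_assoc]
  -- Z^T K Z
  have hZKZ : Zᵀ * K * Z = Matrix.fromBlocks 1 Sig Sig (-1) := by
    rw [hZ, hK, Matrix.fromBlocks_transpose, Matrix.fromBlocks_multiply,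
      Matrix.fromBlocks_multiply]
    simp only [Matrix.transpose_zero, Matrix.zero_mul, Matrix.mul_zero, add_zero, zero_add,
      Matrix.mul_neg, Matrix.neg_mul, neg_zero]
    rw [hUk, hUAV, hVAU, hVk]
  -- the inverse of Z^T K Z
  have hE2 : E * (Sig * Sig) = 1 - E := eq_sub_of_add_eq' hE1
  have hE2' : ∀ {p : Type} [Fintype p] (X : Matrix (Fin k) p ℝ),
      E * (Sig * (Sig * X)) = X - E * X := by
    intro p _ X
    rw [← Matrix.mul_assoc Sig Sig X, ← Matrix.mul_assoc E (Sig * Sig) X, hE2,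
      Matrix.sub_mul, Matrix.one_mul]
  have hTright : Matrix.fromBlocks 1 Sig Sig (-1) *
      Matrix.fromBlocks E (E * Sig) (E * Sig) (-E) = 1 := by
    rw [Matrix.fromBlocks_multiply]
    simp only [Matrix.one_mul, Matrix.mul_neg, Matrix.neg_mul, neg_neg]
    have b11 : E + Sig * (E * Sig) = 1 := by
      rw [← Matrix.mul_assoc, ← hES, Matrix.mul_assoc, hE1]
    have b12 : E * Sig + -(Sig * E) = 0 := by rw [hES, add_neg_cancel]
    have b21 : Sig * E + -(E * Sig) = 0 := by rw [hES, add_neg_cancel]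
    have b22 : Sig * (E * Sig) + E = 1 := by
      rw [← Matrix.mul_assoc, ← hES, Matrix.mul_assoc, add_comm, hE1]
    rw [b11, b12, b21, b22, Matrix.fromBlocks_one]
  have hTinv : (Zᵀ * K * Z)⁻¹ = Matrix.fromBlocks E (E * Sig) (E * Sig) (-E) := by
    rw [hZKZ]; exact Matrix.inv_eq_right_inv hTright
  -- Z^T K in block form
  have hZK : Zᵀ * K = Matrix.fromBlocks (Ukᵀ * M) (Sig * Vkᵀ * N) (Sig * Ukᵀ * M)
      (-(Vkᵀ * N)) := by
    rw [hZ, hK, Matrix.fromBlocks_transpose, Matrix.fromBlocks_multiply]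
    simp only [Matrix.transpose_zero, Matrix.zero_mul, Matrix.mul_zero, add_zero, zero_add,
      Matrix.mul_neg, neg_zero]
    rw [hUA, hVA]
  -- middle product
  have hmid : Matrix.fromBlocks E (E * Sig) (E * Sig) (-E) *
      Matrix.fromBlocks (Ukᵀ * M) (Sig * Vkᵀ * N) (Sig * Ukᵀ * M) (-(Vkᵀ * N)) =
      Matrix.fromBlocks (Ukᵀ * M) 0 0 (Vkᵀ * N) := by
    rw [Matrix.fromBlocks_multiply]
    rw [Matrix.fromBlocks_inj]
    refine ⟨?_, ?_, ?_, ?_⟩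
    · simp only [Matrix.mul_assoc, Matrix.mul_neg, Matrix.neg_mul]
      rw [hE2']
      abel
    · simp only [Matrix.mul_assoc, Matrix.mul_neg, Matrix.neg_mul]
      abel
    · simp only [Matrix.mul_assoc, Matrix.mul_neg, Matrix.neg_mul]
      abel
    · simp only [Matrix.mul_assoc, Matrix.mul_neg, Matrix.neg_mul, neg_neg]
      rw [hE2']
      abel
  -- transpose of Pcal
  have hPcalT : Pcalᵀ = Matrix.fromBlocks (1 - Uk * (Ukᵀ * M)) 0 0 (1 - Vk * (Vkᵀ * N)) := by
    rw [hPcal, Matrix.fromBlocks_transpose, Matrix.transpose_zero, Matrix.transpose_transpose,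
      hP, hQ, Matrix.transpose_sub, Matrix.transpose_one, Matrix.transpose_mul,
      Matrix.transpose_mul, Matrix.transpose_transpose, hMs, Matrix.mul_assoc Vk Vkᵀ N]
    rw [Matrix.transpose_zero]
  -- key identity
  have hKey : Z * ((Zᵀ * K * Z)⁻¹ * (Zᵀ * K)) = 1 - Pcalᵀ := by
    rw [hTinv, hZK, hmid, hZ, hPcalT, Matrix.fromBlocks_multiply, ← Matrix.fromBlocks_one]
    simp only [sub_eq_add_neg, Matrix.fromBlocks_add, Matrix.fromBlocks_neg]
    rw [Matrix.fromBlocks_inj]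
    refine ⟨?_, ?_, ?_, ?_⟩
    · simp only [Matrix.mul_zero, Matrix.zero_mul, add_zero, zero_add]
      abel
    · simp
    · simp
    · simp only [Matrix.mul_zero, Matrix.zero_mul, add_zero, zero_add]
      abel
  -- Pcal K = K Pcalᵀ
  have hQT : Qᵀ = 1 - N * (Vk * Vkᵀ) := by
    rw [hQ, Matrix.transpose_sub, Matrix.transpose_one, Matrix.transpose_mul,
      Matrix.transpose_mul, Matrix.transpose_transpose, hNs]
  have hComm : Pcal * K = K * Pcalᵀ := by
    rw [hPcalT, hPcal, hK, hP, hQT, Matrix.fromBlocks_multiply, Matrix.fromBlocks_multiply,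
      Matrix.fromBlocks_inj]
    refine ⟨?_, ?_, ?_, ?_⟩
    · simp only [Matrix.zero_mul, Matrix.mul_zero, add_zero, zero_add, Matrix.sub_mul,
        Matrix.mul_sub, Matrix.one_mul, Matrix.mul_one, Matrix.mul_assoc]
    · simp only [Matrix.zero_mul, Matrix.mul_zero, add_zero, zero_add, Matrix.sub_mul,
        Matrix.mul_sub, Matrix.one_mul, Matrix.mul_one, Matrix.mul_assoc, hUA, hAV']
    · simp only [Matrix.zero_mul, Matrix.mul_zero, add_zero, zero_add, Matrix.sub_mul,
        Matrix.mul_sub, Matrix.one_mul, Matrix.mul_one, Matrix.mul_assoc, hVA, hAU']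
    · simp only [Matrix.zero_mul, Matrix.mul_zero, add_zero, zero_add, Matrix.sub_mul,
        Matrix.mul_sub, Matrix.one_mul, Matrix.mul_one, Matrix.mul_neg, Matrix.neg_mul,
        Matrix.mul_assoc, neg_sub]
      abel
  -- K is injective
  have hKinj : ∀ x : Fin m ⊕ Fin n → ℝ, K.mulVec x = 0 → x = 0 := by
    intro x hx
    have hxsplit : x = Sum.elim (x ∘ Sum.inl) (x ∘ Sum.inr) := by
      funext i; cases i <;> rfl
    set x1 := x ∘ Sum.inl with hx1def
    set x2 := x ∘ Sum.inr with hx2def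
    rw [hK, hxsplit, Matrix.fromBlocks_mulVec] at hx
    simp only [Sum.elim_comp_inl, Sum.elim_comp_inr] at hx
    have h1 : M.mulVec x1 + A.mulVec x2 = 0 := by
      funext i; simpa using congrFun hx (Sum.inl i)
    have h2 : Aᵀ.mulVec x1 + (-N).mulVec x2 = 0 := by
      funext i; simpa using congrFun hx (Sum.inr i)
    have e1 : x1 ⬝ᵥ M.mulVec x1 + x1 ⬝ᵥ A.mulVec x2 = 0 := by
      have := congrArg (fun v => x1 ⬝ᵥ v) h1
      simpa [dotProduct_add] using this
    have e2 : x2 ⬝ᵥ Aᵀ.mulVec x1 - x2 ⬝ᵥ N.mulVec x2 = 0 := by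
      have := congrArg (fun v => x2 ⬝ᵥ v) h2
      simpa [dotProduct_add, Matrix.neg_mulVec, dotProduct_neg, sub_eq_add_neg] using this
    have cross : x2 ⬝ᵥ Aᵀ.mulVec x1 = x1 ⬝ᵥ A.mulVec x2 := by
      rw [Matrix.dotProduct_mulVec x2 Aᵀ x1, Matrix.vecMul_transpose, dotProduct_comm]
    rw [cross] at e2
    have q1 : (0:ℝ) ≤ x1 ⬝ᵥ M.mulVec x1 := by
      by_cases h : x1 = 0
      · simp [h]
      · exact le_of_lt (by simpa using hM.dotProduct_mulVec_pos h)
    have q2 : (0:ℝ) ≤ x2 ⬝ᵥ N.mulVec x2 := by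
      by_cases h : x2 = 0
      · simp [h]
      · exact le_of_lt (by simpa using hN.dotProduct_mulVec_pos h)
    have hz1 : x1 = 0 := by
      by_contra h
      have p1 : (0:ℝ) < x1 ⬝ᵥ M.mulVec x1 := by simpa using hM.dotProduct_mulVec_pos h
      linarith
    have hz2 : x2 = 0 := by
      by_contra h
      have p2 : (0:ℝ) < x2 ⬝ᵥ N.mulVec x2 := by simpa using hN.dotProduct_mulVec_pos h
      linarith
    rw [hxsplit, hz1, hz2]
    funext i; cases i <;> simp
  -- Pcalᵀ utstar = Pcalᵀ ustar
  have hPerp : Pcalᵀ.mulVec utstar = Pcalᵀ.mulVec ustar := by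
    have hsame : (Pcal * K).mulVec utstar = (Pcal * K).mulVec ustar := by
      rw [hutstar, ← Matrix.mulVec_mulVec, hustar]
    have h0 : K.mulVec (Pcalᵀ.mulVec utstar - Pcalᵀ.mulVec ustar) = 0 := by
      calc K.mulVec (Pcalᵀ.mulVec utstar - Pcalᵀ.mulVec ustar)
          = (K * Pcalᵀ).mulVec utstar - (K * Pcalᵀ).mulVec ustar := by
            rw [Matrix.mulVec_sub, Matrix.mulVec_mulVec, Matrix.mulVec_mulVec]
        _ = (Pcal * K).mulVec utstar - (Pcal * K).mulVec ustar := by rw [hComm]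
        _ = 0 := by rw [hsame, sub_self]
    exact sub_eq_zero.mp (hKinj _ h0)
  -- final assembly
  have hcollapse : Z.mulVec (((Zᵀ * K * Z)⁻¹).mulVec (Zᵀ.mulVec (K.mulVec ustar)))
      = (1 - Pcalᵀ).mulVec ustar := by
    rw [Matrix.mulVec_mulVec, Matrix.mulVec_mulVec, Matrix.mulVec_mulVec]
    have hassoc : Z * (Zᵀ * K * Z)⁻¹ * Zᵀ * K = Z * ((Zᵀ * K * Z)⁻¹ * (Zᵀ * K)) := by
      simp [Matrix.mul_assoc]
    rw [hassoc, hKey]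
  rw [hu, ← hustar, hcollapse, Matrix.sub_mulVec, Matrix.one_mulVec, Matrix.mulVec_sub, hPerp]
  abel
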